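/- Consider problem (P) under the surrogate assumption. Let x⁰ ∈ 𝒳 satisfy c_i(x⁰) < 0 for all i, let F* be the optimal value of (P), set Δ = F(x⁰) − F* ≥ 0, and let (x^k) be generated by Algorithm CMMA (x^{k+1} minimizes z ↦ f̃(z|x^k) + (L/(κ+1))‖z − x^k‖^{κ+1} + r(z) over {z ∈ 𝒳 : c̃_i(z|x^k) ≤ 0 ∀i}). Assume there exist B, ρ > 0 such that for every k with ‖x^{k+1} − x^k‖ ≤ ρ there exist λ ∈ ℝ^m_{≥0} with ‖λ‖_∞ ≤ B and l ∈ ∂r(x^{k+1}) satisfying ∇f̃(x^{k+1}|x^k) + l + L‖d^k‖^{κ−1}d^k + Σ_{i=1}^m λ_i∇c̃_i(x^{k+1}|x^k) ∈ −N_𝒳(x^{k+1}) and λ_i·c̃_i(x^{k+1}|x^k) = 0 for all i, where d^k = x^{k+1} − x^k. Then for every integer K ≥ (κ+1)Δ/(L·ρ^{κ+1}) there exist an index 0 ≤ k* ≤ K−1 and such a multiplier λ ∈ ℝ^m_{≥0}, ‖λ‖_∞ ≤ B, for which: (a) dist(0, ∇f(x^{k*+1}) + ∂r(x^{k*+1})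 + Σ_{i=1}^m λ_i∇c_i(x^{k*+1}) + N_𝒳(x^{k*+1})) ≤ 3L·((κ+1)Δ/(LK))^{κ/(κ+1)} + 2B·Σ_{i=1}^m L_i·((κ+1)Δ/(LK))^{κ_i/(κ+1)}; and (b) for every i with λ_i > 0, 0 ≤ −c_i(x^{k*}) ≤ N_i·((κ+1)Δ/(LK))^{1/(κ+1)}. -/

import Mathlib

open scoped RealInnerProductSpace
open Real Set

/-- The normal cone of a set `X` at a point `u`. -/
def normalCone {n : ℕ} (X : Set (EuclideanSpace ℝ (Fin n)))
    (u : EuclideanSpace ℝ (Fin n)) : Set (EuclideanSpace ℝ (Fin n)) :=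
  {v | ∀ z ∈ X, ⟪v, z - u⟫ ≤ 0}

/-- The convex subdifferential of `r` at `u`. -/
def subgrad {n : ℕ} (r : EuclideanSpace ℝ (Fin n) → ℝ)
    (u : EuclideanSpace ℝ (Fin n)) : Set (EuclideanSpace ℝ (Fin n)) :=
  {l | ∀ z, r u + ⟪l, z - u⟫ ≤ r z}


lemma convex_grad_ineq {n : ℕ} {g : EuclideanSpace ℝ (Fin n) → ℝ}
    (hg : ConvexOn ℝ Set.univ g) {u g'u : EuclideanSpace ℝ (Fin n)}
    (hgrad : HasGradientAt g g'u u) (z : EuclideanSpace ℝ (Fin n)) :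
    g u + ⟪g'u, z - u⟫ ≤ g z := by
  have hγ : HasDerivAt (fun t : ℝ => u + t • (z - u)) (z - u) 0 := by
    simpa using ((hasDerivAt_id (0:ℝ)).smul_const (z - u)).const_add u
  have hgrad' : HasFDerivAt g (InnerProductSpace.toDual ℝ _ g'u)
      ((fun t : ℝ => u + t • (z - u)) 0) := by
    simpa using hgrad.hasFDerivAt
  have hφ : HasDerivAt (fun t : ℝ => g (u + t • (z - u))) ⟪g'u, z - u⟫ 0 := by
    have h := hgrad'.comp_hasDerivAt 0 hγ
    simp at h
    exact h
  have hslope : Filter.Tendsto (slope (fun t : ℝ => g (u + t • (z - u))) 0)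
      (nhdsWithin 0 (Ioi 0)) (nhds ⟪g'u, z - u⟫) :=
    (hasDerivAt_iff_tendsto_slope.mp hφ).mono_left
      (nhdsWithin_mono 0 (fun t ht => ne_of_gt ht))
  have hbound : ∀ᶠ t in nhdsWithin 0 (Ioi 0),
      slope (fun t : ℝ => g (u + t • (z - u))) 0 t ≤ g z - g u := by
    filter_upwards [Ioo_mem_nhdsGT_of_mem (by norm_num : (0:ℝ) ∈ Ico 0 1)] with t ht
    obtain ⟨ht0, ht1⟩ := ht
    have hcomb : u + t • (z - u) = (1 - t) • u + t • z := by
      rw [smul_sub, sub_smul, one_smul]; abel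
    rw [slope_def_field]
    simp only [sub_zero, zero_smul, add_zero]
    rw [div_le_iff₀ ht0, hcomb]
    have : g ((1-t) • u + t • z) ≤ (1-t) * g u + t * g z := by
      have := hg.2 (mem_univ u) (mem_univ z) (by linarith : 0 ≤ 1 - t) ht0.le (by ring)
      simpa [smul_eq_mul] using this
    nlinarith
  have := le_of_tendsto hslope hbound
  linarith

set_option maxHeartbeats 1000000 in
/-- Iteration complexity of Algorithm CMMA towards KKT points of (P)
(Theorem `iter-compl` in the paper). -/
theorem cmma_kkt_complexity {n m : ℕ}
    (X : Set (EuclideanSpace ℝ (Fin n))) (hXconv : Convex ℝ X) (hXclosed : IsClosed X)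
    (f r : EuclideanSpace ℝ (Fin n) → ℝ)
    (c : Fin m → EuclideanSpace ℝ (Fin n) → ℝ)
    (f' : EuclideanSpace ℝ (Fin n) → EuclideanSpace ℝ (Fin n))
    (c' : Fin m → EuclideanSpace ℝ (Fin n) → EuclideanSpace ℝ (Fin n))
    (hf : ∀ x, HasGradientAt f (f' x) x) (hf'cont : Continuous f')
    (hc : ∀ i x, HasGradientAt (c i) (c' i x) x) (hc'cont : ∀ i, Continuous (c' i))
    (hrconv : ConvexOn ℝ univ r)
    (κ : ℝ) (κi : Fin m → ℝ) (L : ℝ) (Li Ni : Fin m → ℝ)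
    (hκ0 : 0 < κ) (hκ1 : κ ≤ 1) (hκi0 : ∀ i, 0 < κi i) (hκi1 : ∀ i, κi i ≤ 1)
    (hL : 0 < L) (hLi : ∀ i, 0 < Li i) (hNi : ∀ i, 0 < Ni i)
    (ft : EuclideanSpace ℝ (Fin n) → EuclideanSpace ℝ (Fin n) → ℝ)
    (ct : Fin m → EuclideanSpace ℝ (Fin n) → EuclideanSpace ℝ (Fin n) → ℝ)
    (ft' : EuclideanSpace ℝ (Fin n) → EuclideanSpace ℝ (Fin n) → EuclideanSpace ℝ (Fin n))
    (ct' : Fin m → EuclideanSpace ℝ (Fin n) → EuclideanSpace ℝ (Fin n) →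
      EuclideanSpace ℝ (Fin n))
    (hftconv : ∀ y, y ∈ X → (∀ i, c i y ≤ 0) → ConvexOn ℝ univ (ft y))
    (hftgrad : ∀ y, y ∈ X → (∀ i, c i y ≤ 0) → ∀ x, HasGradientAt (ft y) (ft' y x) x)
    (hftmaj : ∀ y, y ∈ X → (∀ i, c i y ≤ 0) → ∀ x, f x ≤ ft y x)
    (hfteq : ∀ y, y ∈ X → (∀ i, c i y ≤ 0) → ft y y = f y)
    (hftholder : ∀ y, y ∈ X → (∀ i, c i y ≤ 0) →
      ∀ x, ‖ft' y x - f' x‖ ≤ 2 * L * ‖x - y‖ ^ κ)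
    (hctconv : ∀ i y, y ∈ X → (∀ j, c j y ≤ 0) → ConvexOn ℝ univ (ct i y))
    (hctgrad : ∀ i y, y ∈ X → (∀ j, c j y ≤ 0) → ∀ x, HasGradientAt (ct i y) (ct' i y x) x)
    (hctmaj : ∀ i y, y ∈ X → (∀ j, c j y ≤ 0) → ∀ x, c i x ≤ ct i y x)
    (hcteq : ∀ i y, y ∈ X → (∀ j, c j y ≤ 0) → ct i y y = c i y)
    (hctholder : ∀ i y, y ∈ X → (∀ j, c j y ≤ 0) →
      ∀ x, ‖ct' i y x - c' i x‖ ≤ 2 * Li i * ‖x - y‖ ^ (κi i))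
    (hctbnd : ∀ i x y, x ∈ X → (∀ j, c j x ≤ 0) → y ∈ X → (∀ j, c j y ≤ 0) →
      ‖ct' i y x‖ ≤ Ni i)
    -- the optimal value `F*` of (P)
    (Fstar : ℝ)
    (hFlb : ∀ z ∈ X, (∀ i, c i z ≤ 0) → Fstar ≤ f z + r z)
    (hFatt : ∃ z ∈ X, (∀ i, c i z ≤ 0) ∧ f z + r z = Fstar)
    -- Algorithm CMMA
    (x : ℕ → EuclideanSpace ℝ (Fin n))
    (hx0X : x 0 ∈ X) (hx0 : ∀ i, c i (x 0) < 0)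
    (hstep : ∀ k, x (k + 1) ∈ X ∧ (∀ i, ct i (x k) (x (k + 1)) ≤ 0) ∧
      ∀ z ∈ X, (∀ i, ct i (x k) z ≤ 0) →
        ft (x k) (x (k + 1)) + (L / (κ + 1)) * ‖x (k + 1) - x k‖ ^ (κ + 1) + r (x (k + 1)) ≤
          ft (x k) z + (L / (κ + 1)) * ‖z - x k‖ ^ (κ + 1) + r z)
    -- Assumption 3 (dual boundedness): multipliers exist and are `≤ B` for small residuals
    (B ρ : ℝ) (hB : 0 < B) (hρ : 0 < ρ)
    (hKKT : ∀ k, ‖x (k + 1) - x k‖ ≤ ρ →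
      ∃ (lam : Fin m → ℝ) (l : EuclideanSpace ℝ (Fin n)),
        (∀ i, 0 ≤ lam i) ∧ (∀ i, lam i ≤ B) ∧ l ∈ subgrad r (x (k + 1)) ∧
        (ft' (x k) (x (k + 1)) + l +
            (L * ‖x (k + 1) - x k‖ ^ (κ - 1)) • (x (k + 1) - x k) +
            ∑ i, lam i • ct' i (x k) (x (k + 1))) ∈ -normalCone X (x (k + 1)) ∧
        ∀ i, lam i * ct i (x k) (x (k + 1)) = 0)
    (K : ℕ) (hK1 : 1 ≤ K)
    (hK : (κ + 1) * (f (x 0) + r (x 0) - Fstar) / (L * ρ ^ (κ + 1)) ≤ K) :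
    ∃ k < K, ∃ (lam : Fin m → ℝ) (l : EuclideanSpace ℝ (Fin n)),
      (∀ i, 0 ≤ lam i) ∧ (∀ i, lam i ≤ B) ∧ l ∈ subgrad r (x (k + 1)) ∧
      (ft' (x k) (x (k + 1)) + l +
          (L * ‖x (k + 1) - x k‖ ^ (κ - 1)) • (x (k + 1) - x k) +
          ∑ i, lam i • ct' i (x k) (x (k + 1))) ∈ -normalCone X (x (k + 1)) ∧
      (∀ i, lam i * ct i (x k) (x (k + 1)) = 0) ∧
      Metric.infDist (0 : EuclideanSpace ℝ (Fin n))
        {v | ∃ l' ∈ subgrad r (x (k + 1)), ∃ w ∈ normalCone X (x (k + 1)),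
          v = f' (x (k + 1)) + l' + ∑ i, lam i • c' i (x (k + 1)) + w} ≤
        3 * L * ((κ + 1) * (f (x 0) + r (x 0) - Fstar) / (L * K)) ^ (κ / (κ + 1)) +
          2 * B * ∑ i, Li i *
            ((κ + 1) * (f (x 0) + r (x 0) - Fstar) / (L * K)) ^ (κi i / (κ + 1)) ∧
      ∀ i, 0 < lam i → 0 ≤ -c i (x k) ∧
        -c i (x k) ≤ Ni i *
          ((κ + 1) * (f (x 0) + r (x 0) - Fstar) / (L * K)) ^ (1 / (κ + 1)) := by
  have hκ1' : (0:ℝ) < κ + 1 := by linarith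
  -- all iterates are feasible
  have feas : ∀ k, x k ∈ X ∧ ∀ i, c i (x k) ≤ 0 := by
    intro k; induction k with
    | zero => exact ⟨hx0X, fun i => (hx0 i).le⟩
    | succ k ih =>
      exact ⟨(hstep k).1, fun i =>
        le_trans (hctmaj i (x k) ih.1 ih.2 _) ((hstep k).2.1 i)⟩
  -- descent property
  have hdesc : ∀ k, f (x (k+1)) + r (x (k+1)) +
      (L/(κ+1)) * ‖x (k+1) - x k‖ ^ (κ+1) ≤ f (x k) + r (x k) := by
    intro k
    have hfk := feas k
    have h := (hstep k).2.2 (x k) hfk.1 (fun i => by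
      rw [hcteq i (x k) hfk.1 hfk.2]; exact hfk.2 i)
    have h0 : ‖x k - x k‖ ^ (κ+1) = (0:ℝ) := by
      simp [Real.zero_rpow (ne_of_gt hκ1')]
    rw [hfteq (x k) hfk.1 hfk.2, h0] at h
    have hmaj := hftmaj (x k) hfk.1 hfk.2 (x (k+1))
    linarith
  have hsum : ∀ K', f (x K') + r (x K') +
      (L/(κ+1)) * ∑ k ∈ Finset.range K', ‖x (k+1) - x k‖ ^ (κ+1) ≤
      f (x 0) + r (x 0) := by
    intro K'; induction K' with
    | zero => simp
    | succ K' ih =>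
      rw [Finset.sum_range_succ, mul_add]
      have := hdesc K'
      linarith
  set A := (κ + 1) * (f (x 0) + r (x 0) - Fstar) / (L * K) with hAdef
  have hKpos : (0:ℝ) < K := by exact_mod_cast hK1
  have hΔ0 : 0 ≤ f (x 0) + r (x 0) - Fstar := by
    have := hFlb (x 0) hx0X (fun i => (hx0 i).le); linarith
  have hA0 : 0 ≤ A := by
    apply div_nonneg (by positivity) (by positivity)
  have hρκ : (0:ℝ) < ρ ^ (κ+1) := Real.rpow_pos_of_pos hρ _
  have hAρ : A ≤ ρ ^ (κ+1) := by
    rw [div_le_iff₀ (by positivity)] at hK ⊢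
    nlinarith
  -- find a good index
  have hexist : ∃ k ∈ Finset.range K, ‖x (k+1) - x k‖ ^ (κ+1) ≤ A := by
    by_contra hcon
    push_neg at hcon
    have hlt : ∑ _k ∈ Finset.range K, A <
        ∑ k ∈ Finset.range K, ‖x (k+1) - x k‖ ^ (κ+1) :=
      Finset.sum_lt_sum_of_nonempty
        (Finset.nonempty_range_iff.mpr (by omega)) (fun k hk => hcon k hk)
    rw [Finset.sum_const, Finset.card_range, nsmul_eq_mul] at hlt
    have h1 := hsum K
    have h2 := hFlb (x K) (feas K).1 (feas K).2
    have hKA : (K:ℝ) * A = (κ+1) * (f (x 0) + r (x 0) - Fstar) / L := by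
      rw [hAdef]; field_simp
    have hLκ : (0:ℝ) < L/(κ+1) := by positivity
    have := mul_lt_mul_of_pos_left hlt hLκ
    rw [hKA] at this
    have heq : L/(κ+1) * ((κ+1) * (f (x 0) + r (x 0) - Fstar) / L) =
        f (x 0) + r (x 0) - Fstar := by field_simp
    rw [heq] at this
    linarith
  obtain ⟨k, hkK, hkA⟩ := hexist
  rw [Finset.mem_range] at hkK
  have hd0 : (0:ℝ) ≤ ‖x (k+1) - x k‖ := norm_nonneg _
  have hd_le : ‖x (k+1) - x k‖ ≤ A ^ ((κ+1)⁻¹) := by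
    have h := Real.rpow_le_rpow (by positivity) hkA
      (by positivity : (0:ℝ) ≤ (κ+1)⁻¹)
    rwa [← Real.rpow_mul hd0, mul_inv_cancel₀ (ne_of_gt hκ1'),
      Real.rpow_one] at h
  have hd_ρ : ‖x (k+1) - x k‖ ≤ ρ := by
    have h2 : A ^ ((κ+1)⁻¹) ≤ (ρ ^ (κ+1)) ^ ((κ+1)⁻¹) :=
      Real.rpow_le_rpow hA0 hAρ (by positivity)
    rw [← Real.rpow_mul hρ.le, mul_inv_cancel₀ (ne_of_gt hκ1'),
      Real.rpow_one] at h2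
    linarith [hd_le]
  obtain ⟨lam, l, hlam0, hlamB, hl, hmem, hcs⟩ := hKKT k hd_ρ
  -- powers of the small quantity
  have hpow : ∀ p : ℝ, 0 < p → ‖x (k+1) - x k‖ ^ p ≤ A ^ (p/(κ+1)) := by
    intro p hp
    have h := Real.rpow_le_rpow hd0 hd_le hp.le
    rwa [← Real.rpow_mul hA0, inv_mul_eq_div] at h
  refine ⟨k, hkK, lam, l, hlam0, hlamB, hl, hmem, hcs, ?_, ?_⟩
  · -- distance bound
    set y := x (k+1) with hy
    set d := x (k+1) - x k with hd
    set w := -(ft' (x k) y + l + (L * ‖d‖ ^ (κ - 1)) • d +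
        ∑ i, lam i • ct' i (x k) y) with hwdef
    have hw : w ∈ normalCone X y := Set.mem_neg.mp hmem
    set v := f' y + l + ∑ i, lam i • c' i y + w with hvdef
    have hvmem : v ∈ {v | ∃ l' ∈ subgrad r y, ∃ w' ∈ normalCone X y,
        v = f' y + l' + ∑ i, lam i • c' i y + w'} := ⟨l, hl, w, hw, rfl⟩
    have h1 : Metric.infDist (0 : EuclideanSpace ℝ (Fin n))
        {v | ∃ l' ∈ subgrad r y, ∃ w' ∈ normalCone X y,
          v = f' y + l' + ∑ i, lam i • c' i y + w'} ≤ ‖v‖ := by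
      have := Metric.infDist_le_dist_of_mem (x := (0 : EuclideanSpace ℝ (Fin n))) hvmem
      rwa [dist_zero_left] at this
    have hv : v = (f' y - ft' (x k) y) +
        (∑ i, lam i • (c' i y - ct' i (x k) y)) - (L * ‖d‖ ^ (κ - 1)) • d := by
      simp only [hvdef, hwdef, smul_sub, Finset.sum_sub_distrib]
      abel
    have hfeas1 := feas (k+1)
    have hfeask := feas k
    have ht1 : ‖f' y - ft' (x k) y‖ ≤ 2 * L * A ^ (κ/(κ+1)) := by
      rw [norm_sub_rev]
      refine le_trans (hftholder (x k) hfeask.1 hfeask.2 y) ?_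
      have := hpow κ hκ0
      nlinarith
    have ht3 : ‖(L * ‖d‖ ^ (κ - 1)) • d‖ ≤ L * A ^ (κ/(κ+1)) := by
      rw [norm_smul, Real.norm_eq_abs, abs_of_nonneg (by positivity)]
      rcases eq_or_ne d 0 with h0 | h0
      · simp only [h0, norm_zero, mul_zero]
        positivity
      · have hdp : 0 < ‖d‖ := norm_pos_iff.mpr h0
        have : L * ‖d‖ ^ (κ - 1) * ‖d‖ = L * ‖d‖ ^ κ := by
          rw [mul_assoc, ← Real.rpow_add_one (ne_of_gt hdp)]
          ring_nf
        rw [this]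
        have := hpow κ hκ0
        nlinarith
    have ht2 : ‖∑ i, lam i • (c' i y - ct' i (x k) y)‖ ≤
        2 * B * ∑ i, Li i * A ^ (κi i/(κ+1)) := by
      refine le_trans (norm_sum_le _ _) ?_
      rw [Finset.mul_sum]
      refine Finset.sum_le_sum (fun i _ => ?_)
      rw [norm_smul, Real.norm_eq_abs, abs_of_nonneg (hlam0 i), norm_sub_rev]
      have h2 := hctholder i (x k) hfeask.1 hfeask.2 y
      have h3 := hpow (κi i) (hκi0 i)
      have h4 : ‖ct' i (x k) y - c' i y‖ ≤ 2 * Li i * A ^ (κi i/(κ+1)) := by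
        have := mul_le_mul_of_nonneg_left h3 (by linarith [hLi i] : (0:ℝ) ≤ 2 * Li i)
        linarith
      have h5 : (0:ℝ) ≤ A ^ (κi i/(κ+1)) := Real.rpow_nonneg hA0 _
      nlinarith [hlam0 i, hlamB i, norm_nonneg (ct' i (x k) y - c' i y)]
    calc Metric.infDist (0 : EuclideanSpace ℝ (Fin n)) _ ≤ ‖v‖ := h1
      _ ≤ ‖(f' y - ft' (x k) y) + (∑ i, lam i • (c' i y - ct' i (x k) y))‖ +
          ‖(L * ‖d‖ ^ (κ - 1)) • d‖ := by rw [hv]; exact norm_sub_le _ _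
      _ ≤ ‖f' y - ft' (x k) y‖ + ‖∑ i, lam i • (c' i y - ct' i (x k) y)‖ +
          ‖(L * ‖d‖ ^ (κ - 1)) • d‖ := by
            have := norm_add_le (f' y - ft' (x k) y)
              (∑ i, lam i • (c' i y - ct' i (x k) y))
            linarith
      _ ≤ 3 * L * A ^ (κ/(κ+1)) + 2 * B * ∑ i, Li i * A ^ (κi i/(κ+1)) := by
            linarith
  · -- complementary slackness conclusion
    intro i hlami
    have hct0 : ct i (x k) (x (k+1)) = 0 := by
      rcases mul_eq_zero.mp (hcs i) with h | h
      · exact absurd h (ne_of_gt hlami)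
      · exact h
    refine ⟨by linarith [(feas k).2 i], ?_⟩
    have hconv := hctconv i (x k) (feas k).1 (feas k).2
    have hgrad := hctgrad i (x k) (feas k).1 (feas k).2 (x (k+1))
    have hineq := convex_grad_ineq hconv hgrad (x k)
    rw [hct0, hcteq i (x k) (feas k).1 (feas k).2] at hineq
    have h2 := hctbnd i (x (k+1)) (x k) (feas (k+1)).1 (feas (k+1)).2
      (feas k).1 (feas k).2
    have hCS : -(Ni i * ‖x (k+1) - x k‖) ≤
        ⟪ct' i (x k) (x (k+1)), x k - x (k+1)⟫ := by
      have h1 := abs_real_inner_le_norm (ct' i (x k) (x (k+1))) (x k - x (k+1))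
      have h3 : ‖x k - x (k+1)‖ = ‖x (k+1) - x k‖ := norm_sub_rev _ _
      rw [h3] at h1
      have h4 := neg_abs_le ⟪ct' i (x k) (x (k+1)), x k - x (k+1)⟫
      nlinarith [norm_nonneg (ct' i (x k) (x (k+1))), hd0]
    have h6 : ‖x (k+1) - x k‖ ≤ A ^ (1/(κ+1)) := by
      rw [one_div]; exact hd_le
    nlinarith [hNi i]
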